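/- arXiv:1807.09436 — 2 statements merged into one kernel-verified Lean document; each statement's English description precedes it below -/
import Mathlib

section
/- Let r'_i : D → ℝ for i = 1,…,N and δ ∈ ℕ. There exists x ∈ D with #{i : r'_i(x) ≤ 0} ≥ δ if and only if there exist x ∈ D, y ∈ [0,1]^N, s ∈ ℝ^N with ∑ᵢ yᵢ ≥ δ, yᵢ·sᵢ = 0 for all i, sᵢ ≥ r'_i(x) for all i, and sᵢ ≥ 0 for all i. -/
/-- Lemma 1: equivalence of the update problem and its
complementarity-constraint reformulation. -/
theorem stmt_2 {D : Type*} {N : ℕ} (r' : Fin N → D → ℝ) (δ : ℕ) (hδ : δ ≤ N) :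
    (∃ x : D, δ ≤ (Finset.univ.filter fun i => r' i x ≤ 0).card) ↔
    (∃ (x : D) (y s : Fin N → ℝ),
      (δ : ℝ) ≤ ∑ i, y i ∧
      (∀ i, y i ∈ Set.Icc (0:ℝ) 1) ∧
      (∀ i, y i * s i = 0) ∧
      (∀ i, s i - r' i x ≥ 0) ∧
      (∀ i, s i ≥ 0)) := by
  constructor
  · rintro ⟨x, hx⟩
    refine ⟨x, fun i => if r' i x ≤ 0 then 1 else 0,
      fun i => if r' i x ≤ 0 then 0 else r' i x, ?_, ?_, ?_, ?_, ?_⟩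
    · calc (δ : ℝ) ≤ ((Finset.univ.filter fun i => r' i x ≤ 0).card : ℝ) := by
            exact_mod_cast hx
        _ = ∑ i, if r' i x ≤ 0 then (1:ℝ) else 0 := by
            rw [Finset.sum_ite, Finset.sum_const, Finset.sum_const]; simp
    · intro i; by_cases h : r' i x ≤ 0 <;> simp [h]
    · intro i; by_cases h : r' i x ≤ 0 <;> simp [h]
    · intro i; by_cases h : r' i x ≤ 0 <;> simp [h] <;> linarith [not_le.mp h]
    · intro i; by_cases h : r' i x ≤ 0 <;> simp [h]; linarith [not_le.mp h]
  · rintro ⟨x, y, s, hsum, hy01, hcomp, hsr, hs⟩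
    refine ⟨x, ?_⟩
    have key : ∀ i, y i ≤ if r' i x ≤ 0 then (1:ℝ) else 0 := by
      intro i
      by_cases h : r' i x ≤ 0
      · simpa [h] using (hy01 i).2
      · simp only [h, if_false]
        rcases eq_or_lt_of_le (hy01 i).1 with heq | hpos
        · linarith
        · have : s i = 0 := by
            have := hcomp i
            rcases mul_eq_zero.mp this with h1 | h2
            · linarith
            · exact h2
          have h2 := hsr i; rw [this] at h2; linarith [not_le.mp h]
    have hle : (δ:ℝ) ≤ ∑ i, if r' i x ≤ 0 then (1:ℝ) else 0 :=
      le_trans hsum (Finset.sum_le_sum fun i _ => key i)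
    have : (δ:ℝ) ≤ ((Finset.univ.filter fun i => r' i x ≤ 0).card : ℝ) := by
      calc (δ:ℝ) ≤ _ := hle
        _ = _ := by rw [Finset.sum_ite, Finset.sum_const, Finset.sum_const]; simp
    exact_mod_cast this
end

section
/- Consider minimizing ∑ᵢ yᵢsᵢ over x ∈ D, s ∈ ℝ^N, y ∈ ℝ^N subject to ∑ᵢ yᵢ ≥ δ, yᵢ ∈ [0,1], sᵢ ≥ r'_i(x), sᵢ ≥ 0 for all i. The objective is bounded below by 0 on the feasible set, and if a global minimizer (x*, s*, y*) attains objective value 0, then #{i : r'_i(x*) ≤ 0} ≥ δ. -/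
/-- Lemma 2: the objective ∑ᵢ yᵢsᵢ of the continuous program is bounded
below by 0 on the feasible set, and if a global minimizer attains value 0 then the
consensus of x* is at least δ. -/
theorem stmt_4 {D : Type*} {N : ℕ} (r' : Fin N → D → ℝ) (δ : ℕ) (hδ : δ ≤ N)
    (Feas : D → (Fin N → ℝ) → (Fin N → ℝ) → Prop)
    (hFeas : ∀ x s y, Feas x s y ↔
      ((δ : ℝ) ≤ ∑ i, y i ∧ (∀ i, y i ∈ Set.Icc (0:ℝ) 1) ∧
       (∀ i, s i - r' i x ≥ 0) ∧ (∀ i, s i ≥ 0)))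
    (xs : D) (ss ys : Fin N → ℝ)
    (hfeas : Feas xs ss ys)
    (hmin : ∀ x s y, Feas x s y → ∑ i, ys i * ss i ≤ ∑ i, y i * s i) :
    (∀ x s y, Feas x s y → (0:ℝ) ≤ ∑ i, y i * s i) ∧
    (∑ i, ys i * ss i = 0 → δ ≤ (Finset.univ.filter fun i => r' i xs ≤ 0).card) := by
  constructor
  · intro x s y hf
    rw [hFeas] at hf
    obtain ⟨-, hy, -, hs⟩ := hf
    exact Finset.sum_nonneg fun i _ => mul_nonneg (hy i).1 (hs i)
  · intro hzero
    classical
    rw [hFeas] at hfeas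
    obtain ⟨hsum, hy, hr, hs⟩ := hfeas
    have hterm : ∀ i ∈ Finset.univ, ys i * ss i = 0 := by
      apply (Finset.sum_eq_zero_iff_of_nonneg ?_).mp hzero
      exact fun i _ => mul_nonneg (hy i).1 (hs i)
    set S := Finset.univ.filter fun i => r' i xs ≤ 0 with hS
    have hout : ∀ i ∈ Finset.univ \ S, ys i = 0 := by
      intro i hi
      simp only [hS, Finset.mem_sdiff, Finset.mem_filter, Finset.mem_univ,
        true_and, not_le] at hi
      have hspos : 0 < ss i := lt_of_lt_of_le hi (by linarith [hr i])
      have := hterm i (Finset.mem_univ i)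
      rcases mul_eq_zero.mp this with h | h
      · exact h
      · exact absurd h (ne_of_gt hspos)
    have hle : (δ : ℝ) ≤ S.card := by
      calc (δ : ℝ) ≤ ∑ i, ys i := hsum
        _ = ∑ i ∈ S, ys i := by
            rw [← Finset.sum_sdiff (Finset.filter_subset (fun i => r' i xs ≤ 0) Finset.univ),
              Finset.sum_eq_zero hout, zero_add]
        _ ≤ ∑ i ∈ S, 1 := Finset.sum_le_sum fun i _ => (hy i).2
        _ = S.card := by simp
    exact_mod_cast hle
end
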